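/- Let ε > 0, b = e^{−ε}, n ≥ 1, and 0 ≤ θ₀ < θ₁ ≤ 1. Let X ~ Binom(n, θ). Define φ*(x) = F₀(x − m) where F₀ is the cdf of Tulap(0, b, 0) and m is chosen so that E_{θ₀} φ*(X) = α ∈ (0,1). Then for every test φ : {0,…,n} → [0,1] satisfying the (ε,0)-DP constraints (φ(x) ≤ e^ε φ(x−1), φ(x−1) ≤ e^ε φ(x), 1−φ(x) ≤ e^ε(1−φ(x−1)), 1−φ(x−1) ≤ e^ε(1−φ(x)) for all x ∈ {1,…,n}) with E_{θ₀} φ(X) ≤ α, we have E_{θ₁} φ*(X) ≥ E_{θ₁} φ(X). -/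

import Mathlib

noncomputable def clampR (u : ℝ) : ℝ := max 0 (min 1 u)

lemma clampR_nonneg (u : ℝ) : 0 ≤ clampR u := le_max_left _ _

lemma clampR_le_one (u : ℝ) : clampR u ≤ 1 := max_le zero_le_one (min_le_left _ _)

lemma clampR_eq_zero {u : ℝ} (h : u ≤ 0) : clampR u = 0 := by
  exact max_eq_left (le_trans (min_le_right _ _) h)

lemma one_sub_clampR (u : ℝ) : 1 - clampR u = clampR (1 - u) := by
  unfold clampR
  rcases le_total u 0 with h | h <;> rcases le_total (1:ℝ) u with h1 | h1 <;>
    simp [max_def, min_def] <;> split_ifs <;> linarith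

lemma gsummable {b : ℝ} (hb0 : 0 ≤ b) (hb1 : b < 1) :
    Summable (fun l : ℤ => b ^ l.natAbs) := by
  apply Summable.of_nat_of_neg_add_one
  · simpa using summable_geometric_of_lt_one hb0 hb1
  · have h : ∀ n : ℕ, ((-((n:ℤ) + 1)).natAbs) = n + 1 := by intro n; omega
    simp only [h]
    exact (summable_geometric_of_lt_one hb0 hb1).mul_right b |>.congr (by
      intro n; rw [pow_succ])

lemma gmass {b : ℝ} (hb0 : 0 ≤ b) (hb1 : b < 1) :
    HasSum (fun l : ℤ => b ^ l.natAbs) ((1 + b) / (1 - b)) := by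
  have h1 : HasSum (fun n : ℕ => b ^ n) (1 - b)⁻¹ := hasSum_geometric_of_lt_one hb0 hb1
  have h2 : HasSum (fun n : ℕ => b ^ ((-((n:ℤ) + 1)).natAbs)) (b * (1 - b)⁻¹) := by
    have h : ∀ n : ℕ, ((-((n:ℤ) + 1)).natAbs) = n + 1 := by intro n; omega
    simp only [h]
    have he : (fun n : ℕ => b ^ (n+1)) = fun n : ℕ => b * b ^ n := by
      funext n; rw [pow_succ]; ring
    rw [he]
    exact h1.mul_left b
  have hb : (1:ℝ) - b ≠ 0 := by linarith
  have hs : (1+b)/(1-b) = (1-b)⁻¹ + b*(1-b)⁻¹ := by field_simp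
  rw [hs]
  exact HasSum.of_nat_of_neg_add_one (by simpa using h1) h2

noncomputable def Gfun (ε : ℝ) (t : ℝ) : ℝ :=
  ∑' l : ℤ, ((1 - Real.exp (-ε)) / (1 + Real.exp (-ε))) * Real.exp (-ε) ^ l.natAbs *
    clampR (t - l + 1 / 2)

lemma csummable {b q : ℝ} (hq : 0 ≤ q) (hb0 : 0 ≤ b) (hb1 : b < 1) (f : ℤ → ℝ)
    (hf0 : ∀ l, 0 ≤ f l) (hf1 : ∀ l, f l ≤ 1) :
    Summable (fun l : ℤ => q * b ^ l.natAbs * f l) := by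
  apply Summable.of_nonneg_of_le
    (fun l => mul_nonneg (mul_nonneg hq (pow_nonneg hb0 _)) (hf0 l))
    (fun l => ?_) ((gsummable hb0 hb1).mul_left q)
  calc q * b ^ l.natAbs * f l ≤ q * b ^ l.natAbs * 1 := by
        apply mul_le_mul_of_nonneg_left (hf1 l) (by positivity)
    _ = q * b ^ l.natAbs := by ring

lemma hb1 {ε : ℝ} (hε : 0 < ε) : Real.exp (-ε) < 1 := by
  rw [← Real.exp_zero]; exact Real.exp_lt_exp.mpr (by linarith)

lemma hq0 {ε : ℝ} (hε : 0 < ε) : 0 ≤ (1 - Real.exp (-ε)) / (1 + Real.exp (-ε)) := by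
  have h1 := hb1 hε
  have h2 := Real.exp_pos (-ε)
  have h3 : 0 ≤ 1 - Real.exp (-ε) := by linarith
  have h4 : 0 < 1 + Real.exp (-ε) := by linarith
  positivity

lemma Gsummable {ε : ℝ} (hε : 0 < ε) (t : ℝ) :
    Summable (fun l : ℤ => ((1 - Real.exp (-ε)) / (1 + Real.exp (-ε))) *
      Real.exp (-ε) ^ l.natAbs * clampR (t - l + 1 / 2)) :=
  csummable (hq0 hε) (Real.exp_pos _).le (hb1 hε) _ (fun l => clampR_nonneg _)
    (fun l => clampR_le_one _)

lemma Gmass {ε : ℝ} (hε : 0 < ε) : HasSum (fun l : ℤ => ((1 - Real.exp (-ε)) / (1 + Real.exp (-ε))) *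
    Real.exp (-ε) ^ l.natAbs) 1 := by
  have h := (gmass (Real.exp_pos (-ε)).le (hb1 hε)).mul_left
    ((1 - Real.exp (-ε)) / (1 + Real.exp (-ε)))
  have h1 := hb1 hε
  have h2 := Real.exp_pos (-ε)
  have he : (1 - Real.exp (-ε)) / (1 + Real.exp (-ε)) * ((1 + Real.exp (-ε)) / (1 - Real.exp (-ε))) = 1 := by
    have hne1 : (1 : ℝ) + Real.exp (-ε) ≠ 0 := by positivity
    have hne2 : (1 : ℝ) - Real.exp (-ε) ≠ 0 := by linarith
    field_simp
  rwa [he] at h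

lemma Gshift {ε : ℝ} (hε : 0 < ε) (t : ℝ) (ht : t ≤ -(1/2)) : Gfun ε (t + 1) = Real.exp ε * Gfun ε t := by
  set q := (1 - Real.exp (-ε)) / (1 + Real.exp (-ε)) with hqdef
  set b := Real.exp (-ε) with hbdef
  unfold Gfun
  rw [← (Equiv.addRight (1:ℤ)).tsum_eq
    (fun l : ℤ => q * b ^ l.natAbs * clampR (t + 1 - l + 1 / 2)), ← tsum_mul_left]
  apply tsum_congr
  intro j
  simp only [Equiv.coe_addRight]
  have hc : t + 1 - ((j + 1 : ℤ) : ℝ) + 1/2 = t - (j:ℝ) + 1/2 := by push_cast; ring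
  rw [hc]
  by_cases hpos : t - (j:ℝ) + 1/2 ≤ 0
  · rw [clampR_eq_zero hpos]; ring
  · have hj : (j:ℝ) < 0 := by
      have := not_le.mp hpos; linarith
    have hj' : j < 0 := by exact_mod_cast hj
    have hn : j.natAbs = (j+1).natAbs + 1 := by omega
    have hee : Real.exp ε * b = 1 := by rw [hbdef, ← Real.exp_add]; simp
    rw [hn, pow_succ]
    calc q * b ^ (j+1).natAbs * clampR (t - (j:ℝ) + 1/2)
        = (Real.exp ε * b) * (q * b ^ (j+1).natAbs * clampR (t - (j:ℝ) + 1/2)) := by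
          rw [hee]; ring
      _ = Real.exp ε * (q * (b ^ (j+1).natAbs * b) * clampR (t - (j:ℝ) + 1/2)) := by ring

lemma Greflect {ε : ℝ} (hε : 0 < ε) (t : ℝ) : Gfun ε (-t) = 1 - Gfun ε t := by
  set q := (1 - Real.exp (-ε)) / (1 + Real.exp (-ε)) with hqdef
  set b := Real.exp (-ε) with hbdef
  have hsum1 := Gsummable hε t
  have hG : HasSum (fun l : ℤ => q * b ^ l.natAbs * clampR (t - l + 1 / 2)) (Gfun ε t) :=
    hsum1.hasSum
  have h2 : HasSum (fun l : ℤ => q * b ^ l.natAbs * (1 - clampR (t - l + 1 / 2)))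
      (1 - Gfun ε t) := by
    have := (Gmass hε).sub hG
    exact this.congr_fun (fun l => by ring)
  have h3 : HasSum (fun l : ℤ => q * b ^ l.natAbs * clampR (-t + l + 1 / 2))
      (1 - Gfun ε t) := by
    apply h2.congr_fun
    intro l
    rw [one_sub_clampR]
    congr 1
    ring
  have h4 : HasSum (fun j : ℤ => q * b ^ j.natAbs * clampR (-t - j + 1 / 2))
      (1 - Gfun ε t) := by
    have h5 := (Equiv.neg ℤ).hasSum_iff.mpr h3
    apply h5.congr_fun
    intro j
    simp only [Function.comp, Equiv.neg_apply, Int.natAbs_neg]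
    congr 2
    push_cast
    ring
  exact h4.tsum_eq

lemma Gshift' {ε : ℝ} (hε : 0 < ε) (t : ℝ) (ht : -(1/2) ≤ t) :
    Gfun ε (t + 1) = 1 - Real.exp (-ε) * (1 - Gfun ε t) := by
  have h1 := Greflect hε (-(t+1))
  rw [neg_neg] at h1
  have h2 := Gshift hε (-(t+1)) (by linarith)
  rw [show (-(t+1) + 1 : ℝ) = -t by ring] at h2
  have h3 := Greflect hε t
  have hee : Real.exp ε * Real.exp (-ε) = 1 := by rw [← Real.exp_add]; simp
  rw [h1]
  have : Gfun ε (-(t+1)) = Real.exp (-ε) * (1 - Gfun ε t) := by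
    rw [h3] at h2
    linear_combination (-(Real.exp (-ε))) * h2 - Gfun ε (-(t+1)) * hee
  rw [this]

lemma tp2 (n a d : ℕ) (hle : a + d ≤ n) (θ₀ θ₁ : ℝ) (h0 : 0 ≤ θ₀) (h01 : θ₀ ≤ θ₁)
    (h1 : θ₁ ≤ 1) :
    ((n.choose a : ℝ) * θ₁ ^ a * (1 - θ₁) ^ (n - a)) *
      ((n.choose (a + d) : ℝ) * θ₀ ^ (a + d) * (1 - θ₀) ^ (n - (a + d))) ≤
    ((n.choose a : ℝ) * θ₀ ^ a * (1 - θ₀) ^ (n - a)) *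
      ((n.choose (a + d) : ℝ) * θ₁ ^ (a + d) * (1 - θ₁) ^ (n - (a + d))) := by
  have hd : (θ₀ * (1 - θ₁)) ^ d ≤ (θ₁ * (1 - θ₀)) ^ d := by
    apply pow_le_pow_left₀ (by nlinarith) (by nlinarith)
  rw [mul_pow, mul_pow] at hd
  have he : n - a = (n - (a + d)) + d := by omega
  rw [he]; simp only [pow_add]
  have hcommon : (0:ℝ) ≤ (n.choose a : ℝ) * (n.choose (a+d) : ℝ) * θ₁ ^ a * θ₀ ^ a *
      (1 - θ₁) ^ (n - (a+d)) * (1 - θ₀) ^ (n - (a+d)) := by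
    have : (0:ℝ) ≤ θ₁ := le_trans h0 h01
    have : (0:ℝ) ≤ 1 - θ₁ := by linarith
    have : (0:ℝ) ≤ 1 - θ₀ := by linarith
    positivity
  nlinarith [mul_le_mul_of_nonneg_left hd hcommon]

theorem stmt_11 (n : ℕ) (hn : 1 ≤ n) (ε : ℝ) (hε : 0 < ε)
    (θ₀ θ₁ α m : ℝ) (hθ₀ : 0 ≤ θ₀) (hθ : θ₀ < θ₁) (hθ₁ : θ₁ ≤ 1)
    (hα0 : 0 < α) (hα1 : α < 1)
    (F₀ : ℝ → ℝ)
    (hF₀ : ∀ x : ℝ, F₀ x = ∑' l : ℤ,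
      ((1 - Real.exp (-ε)) / (1 + Real.exp (-ε))) * Real.exp (-ε) ^ l.natAbs *
        max 0 (min 1 (x - l + 1 / 2)))
    (φstar : ℕ → ℝ) (hφstar : ∀ x : ℕ, φstar x = F₀ ((x : ℝ) - m))
    (hsize : ∑ x ∈ Finset.range (n + 1),
      φstar x * (n.choose x : ℝ) * θ₀ ^ x * (1 - θ₀) ^ (n - x) = α)
    (φ : ℕ → ℝ) (h01 : ∀ x ≤ n, φ x ∈ Set.Icc (0 : ℝ) 1)
    (hDP : ∀ x : ℕ, 1 ≤ x → x ≤ n →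
      φ x ≤ Real.exp ε * φ (x - 1) ∧ φ (x - 1) ≤ Real.exp ε * φ x ∧
      1 - φ x ≤ Real.exp ε * (1 - φ (x - 1)) ∧
      1 - φ (x - 1) ≤ Real.exp ε * (1 - φ x))
    (hlevel : ∑ x ∈ Finset.range (n + 1),
      φ x * (n.choose x : ℝ) * θ₀ ^ x * (1 - θ₀) ^ (n - x) ≤ α) :
    ∑ x ∈ Finset.range (n + 1),
      φ x * (n.choose x : ℝ) * θ₁ ^ x * (1 - θ₁) ^ (n - x) ≤
    ∑ x ∈ Finset.range (n + 1),
      φstar x * (n.choose x : ℝ) * θ₁ ^ x * (1 - θ₁) ^ (n - x) := by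
  classical
  have hb0 : 0 < Real.exp (-ε) := Real.exp_pos _
  have hbl1 : Real.exp (-ε) < 1 := hb1 hε
  have hθ₁0 : 0 < θ₁ := lt_of_le_of_lt hθ₀ hθ
  have hθ₀1 : θ₀ < 1 := lt_of_lt_of_le hθ hθ₁
  have hφG : ∀ x : ℕ, φstar x = Gfun ε ((x : ℝ) - m) := by
    intro x
    rw [hφstar x, hF₀ ((x : ℝ) - m)]
    rfl
  -- propagation of φ ≤ φstar upward
  have prop : ∀ x : ℕ, x < n → φ x ≤ φstar x → φ (x + 1) ≤ φstar (x + 1) := by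
    intro x hx hle
    obtain ⟨hdp1, hdp2, hdp3, hdp4⟩ := hDP (x + 1) (by omega) (by omega)
    simp only [Nat.add_sub_cancel] at hdp1 hdp2 hdp3 hdp4
    have hcast : ((x + 1 : ℕ) : ℝ) - m = ((x : ℝ) - m) + 1 := by push_cast; ring
    rcases le_total ((x : ℝ) - m) (-(1/2)) with hc | hc
    · have hG := Gshift hε ((x : ℝ) - m) hc
      rw [hφG (x + 1), hcast, hG, ← hφG x]
      calc φ (x + 1) ≤ Real.exp ε * φ x := hdp1
        _ ≤ Real.exp ε * φstar x :=
            mul_le_mul_of_nonneg_left hle (Real.exp_pos ε).le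
    · have hG := Gshift' hε ((x : ℝ) - m) hc
      rw [hφG (x + 1), hcast, hG, ← hφG x]
      have hee : Real.exp (-ε) * Real.exp ε = 1 := by rw [← Real.exp_add]; simp
      have h5 : Real.exp (-ε) * (1 - φ x) ≤ 1 - φ (x + 1) := by
        have h := mul_le_mul_of_nonneg_left hdp4 hb0.le
        rw [← mul_assoc, hee, one_mul] at h
        exact h
      have h6 : Real.exp (-ε) * (1 - φstar x) ≤ Real.exp (-ε) * (1 - φ x) :=
        mul_le_mul_of_nonneg_left (by linarith) hb0.le
      linarith
  set w₀ : ℕ → ℝ := fun x => (n.choose x : ℝ) * θ₀ ^ x * (1 - θ₀) ^ (n - x) with hw₀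
  set w₁ : ℕ → ℝ := fun x => (n.choose x : ℝ) * θ₁ ^ x * (1 - θ₁) ^ (n - x) with hw₁
  have hsum0 : ∑ x ∈ Finset.range (n + 1), (φ x - φstar x) * w₀ x ≤ 0 := by
    have heq : ∑ x ∈ Finset.range (n + 1), (φ x - φstar x) * w₀ x
        = (∑ x ∈ Finset.range (n + 1),
            φ x * (n.choose x : ℝ) * θ₀ ^ x * (1 - θ₀) ^ (n - x))
          - ∑ x ∈ Finset.range (n + 1),
            φstar x * (n.choose x : ℝ) * θ₀ ^ x * (1 - θ₀) ^ (n - x) := by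
      rw [← Finset.sum_sub_distrib]
      apply Finset.sum_congr rfl
      intro x _
      simp only [hw₀]
      ring
    rw [heq, hsize]
    linarith
  have hex : ∃ x, x ≤ n ∧ φ x ≤ φstar x := by
    by_contra hno
    push_neg at hno
    have hpos : 0 < ∑ x ∈ Finset.range (n + 1), (φ x - φstar x) * w₀ x := by
      apply Finset.sum_pos'
      · intro x hx
        have hxn : x ≤ n := Nat.lt_succ_iff.mp (Finset.mem_range.mp hx)
        have h1 : 0 < φ x - φstar x := by have := hno x hxn; linarith
        have h2 : 0 ≤ w₀ x := by
          have h3 : (0:ℝ) ≤ 1 - θ₀ := by linarith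
          simp only [hw₀]
          positivity
        exact mul_nonneg h1.le h2
      · refine ⟨0, Finset.mem_range.mpr (by omega), ?_⟩
        have h1 : 0 < φ 0 - φstar 0 := by have := hno 0 (by omega); linarith
        have h2 : 0 < w₀ 0 := by
          have h3 : (0:ℝ) < 1 - θ₀ := by linarith
          simp only [hw₀, Nat.choose_zero_right, pow_zero, Nat.sub_zero, Nat.cast_one]
          positivity
        exact mul_pos h1 h2
    linarith
  set k := Nat.find hex with hkdef
  obtain ⟨hkn, hkle⟩ : k ≤ n ∧ φ k ≤ φstar k := Nat.find_spec hex
  have hkmin : ∀ j, j < k → φstar j < φ j := by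
    intro j hj
    have hmin := Nat.find_min hex hj
    push_neg at hmin
    exact hmin (by omega)
  have hup : ∀ x, k ≤ x → x ≤ n → φ x ≤ φstar x := by
    intro x hkx
    refine Nat.le_induction (fun _ => hkle) ?_ x hkx
    intro y hky ih hyn
    exact prop y (by omega) (ih (by omega))
  have hw₀k : 0 < w₀ k := by
    rcases eq_or_lt_of_le hθ₀ with h0 | h0
    · have hk0 : k = 0 := by
        rw [hkdef, Nat.find_eq_zero]
        refine ⟨by omega, ?_⟩
        have hsum_eq : ∑ x ∈ Finset.range (n + 1), (φ x - φstar x) * w₀ x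
            = (φ 0 - φstar 0) * w₀ 0 := by
          apply Finset.sum_eq_single_of_mem 0 (Finset.mem_range.mpr (by omega))
          intro x _ hx0
          have hz : θ₀ ^ x = 0 := by rw [← h0]; exact zero_pow hx0
          simp [hw₀, hz]
        have hw00 : w₀ 0 = 1 := by
          simp [hw₀, ← h0]
        rw [hsum_eq, hw00, mul_one] at hsum0
        linarith
      rw [hk0]
      have hw00 : w₀ 0 = 1 := by simp [hw₀, ← h0]
      rw [hw00]
      norm_num
    · have h3 : (0:ℝ) < 1 - θ₀ := by linarith
      have hc : 0 < (n.choose k : ℝ) := by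
        exact_mod_cast Nat.choose_pos hkn
      simp only [hw₀]
      positivity
  have key : (∑ x ∈ Finset.range (n + 1), (φ x - φstar x) * w₁ x) * w₀ k
      ≤ (∑ x ∈ Finset.range (n + 1), (φ x - φstar x) * w₀ x) * w₁ k := by
    rw [Finset.sum_mul, Finset.sum_mul]
    apply Finset.sum_le_sum
    intro x hx
    have hxn : x ≤ n := Nat.lt_succ_iff.mp (Finset.mem_range.mp hx)
    rcases lt_or_ge x k with hxk | hxk
    · have hg : 0 ≤ φ x - φstar x := le_of_lt (sub_pos.mpr (hkmin x hxk))
      obtain ⟨d, hd⟩ : ∃ d, k = x + d := le_iff_exists_add.mp hxk.le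
      have hdn : x + d ≤ n := by omega
      rw [hd]
      have ht := tp2 n x d hdn θ₀ θ₁ hθ₀ hθ.le hθ₁
      simp only [hw₀, hw₁]
      nlinarith [mul_le_mul_of_nonneg_left ht hg]
    · have hg : φ x - φstar x ≤ 0 := sub_nonpos.mpr (hup x hxk hxn)
      obtain ⟨d, hd⟩ : ∃ d, x = k + d := le_iff_exists_add.mp hxk
      have hdn : k + d ≤ n := by omega
      rw [hd]
      have ht := tp2 n k d hdn θ₀ θ₁ hθ₀ hθ.le hθ₁
      simp only [hw₀, hw₁]
      rw [hd] at hg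
      nlinarith [mul_le_mul_of_nonpos_left ht hg]
  have hw₁k : 0 ≤ w₁ k := by
    have h3 : (0:ℝ) ≤ 1 - θ₁ := by linarith
    simp only [hw₁]
    positivity
  have hsum1 : ∑ x ∈ Finset.range (n + 1), (φ x - φstar x) * w₁ x ≤ 0 := by
    by_contra hcon
    push_neg at hcon
    nlinarith [mul_pos hcon hw₀k, mul_nonneg (neg_nonneg.mpr hsum0) hw₁k]
  have heq1 : ∑ x ∈ Finset.range (n + 1), (φ x - φstar x) * w₁ x
      = (∑ x ∈ Finset.range (n + 1),
          φ x * (n.choose x : ℝ) * θ₁ ^ x * (1 - θ₁) ^ (n - x))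
        - ∑ x ∈ Finset.range (n + 1),
          φstar x * (n.choose x : ℝ) * θ₁ ^ x * (1 - θ₁) ^ (n - x) := by
    rw [← Finset.sum_sub_distrib]
    apply Finset.sum_congr rfl
    intro x _
    simp only [hw₁]
    ring
  rw [heq1] at hsum1
  linarith
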